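/- Let m ≥ 1 and let X < 2^(2m) be a natural number, with high half X_H = X / 2^m and low half X_L = X % 2^m. Then LZC_{2m}(X) = m + LZC_m(X_L) if X_H = 0, and LZC_{2m}(X) = LZC_m(X_H) otherwise. -/

import Mathlib

/-- The `m`-bit leading-zero count: `m` if `X = 0`, otherwise the least `γ`
such that `X.testBit (m - 1 - γ) = true`. -/
noncomputable def LZC (m X : ℕ) : ℕ :=
  if X = 0 then m else sInf {γ : ℕ | X.testBit (m - 1 - γ) = true}

lemma sInf_eq_aux {S : Set ℕ} {n : ℕ} (h1 : n ∈ S) (h2 : ∀ k < n, k ∉ S) :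
    sInf S = n :=
  le_antisymm (Nat.sInf_le h1)
    (le_of_not_gt fun h => h2 _ h (Nat.sInf_mem ⟨n, h1⟩))

lemma testBit_log2 {X : ℕ} (h : X ≠ 0) : X.testBit X.log2 = true := by
  rw [Nat.testBit_eq_decide_div_mod_eq]
  have h1 : 2 ^ X.log2 ≤ X := Nat.log2_self_le h
  have h2 : X < 2 ^ (X.log2 + 1) := Nat.lt_log2_self
  have : X / 2 ^ X.log2 = 1 := by
    apply Nat.div_eq_of_lt_le (by simpa using h1)
    simpa [pow_succ, mul_comm] using h2
  simp [this]

lemma div_testBit (X m j : ℕ) : (X / 2 ^ m).testBit j = X.testBit (m + j) := by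
  simp [Nat.testBit_eq_decide_div_mod_eq, Nat.div_div_eq_div_mul, ← pow_add]

theorem stmt_9 (m X : ℕ) (hm : 1 ≤ m) (hX : X < 2 ^ (2 * m)) :
    LZC (2 * m) X =
      if X / 2 ^ m = 0 then m + LZC m (X % 2 ^ m) else LZC m (X / 2 ^ m) := by
  by_cases hH : X / 2 ^ m = 0
  · -- X < 2^m
    have hXm : X < 2 ^ m := by
      exact ((Nat.div_eq_zero_iff).1 hH).resolve_left (by positivity)
    rw [if_pos hH, Nat.mod_eq_of_lt hXm]
    by_cases h0 : X = 0
    · simp [LZC, h0, two_mul]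
    · rw [LZC, LZC, if_neg h0, if_neg h0]
      set d := sInf {γ : ℕ | X.testBit (m - 1 - γ) = true} with hd
      have hlog : X.log2 < m := (Nat.log2_lt h0).2 hXm
      have hmem : (m - 1 - X.log2) ∈ {γ : ℕ | X.testBit (m - 1 - γ) = true} := by
        have : m - 1 - (m - 1 - X.log2) = X.log2 := by omega
        simp only [Set.mem_setOf_eq, this]
        exact testBit_log2 h0
      have hdmem : X.testBit (m - 1 - d) = true := Nat.sInf_mem ⟨_, hmem⟩
      have hdle : d ≤ m - 1 := le_trans (Nat.sInf_le hmem) (by omega)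
      apply sInf_eq_aux
      · show X.testBit (2 * m - 1 - (m + d)) = true
        have : 2 * m - 1 - (m + d) = m - 1 - d := by omega
        rw [this]; exact hdmem
      · intro k hk hkmem
        simp only [Set.mem_setOf_eq] at hkmem
        by_cases hkm : k < m
        · have : 2 ^ m ≤ 2 ^ (2 * m - 1 - k) :=
            Nat.pow_le_pow_right (by norm_num) (by omega)
          rw [Nat.testBit_lt_two_pow (lt_of_lt_of_le hXm this)] at hkmem
          exact Bool.false_ne_true hkmem
        · have heq : 2 * m - 1 - k = m - 1 - (k - m) := by omega
          rw [heq] at hkmem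
          have : d ≤ k - m := Nat.sInf_le (show k - m ∈ _ from hkmem)
          omega
  · -- X / 2^m ≠ 0
    rw [if_neg hH]
    have h0 : X ≠ 0 := fun h => hH (by simp [h])
    have hHlt : X / 2 ^ m < 2 ^ m := by
      rw [Nat.div_lt_iff_lt_mul (by positivity), ← pow_add]
      simpa [two_mul] using hX
    rw [LZC, LZC, if_neg h0, if_neg hH]
    set d := sInf {γ : ℕ | (X / 2 ^ m).testBit (m - 1 - γ) = true} with hd
    have hlog : (X / 2 ^ m).log2 < m := (Nat.log2_lt hH).2 hHlt
    have hmem : (m - 1 - (X / 2 ^ m).log2) ∈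
        {γ : ℕ | (X / 2 ^ m).testBit (m - 1 - γ) = true} := by
      have : m - 1 - (m - 1 - (X / 2 ^ m).log2) = (X / 2 ^ m).log2 := by omega
      simp only [Set.mem_setOf_eq, this]
      exact testBit_log2 hH
    have hdmem : (X / 2 ^ m).testBit (m - 1 - d) = true := Nat.sInf_mem ⟨_, hmem⟩
    have hdle : d ≤ m - 1 := le_trans (Nat.sInf_le hmem) (by omega)
    apply sInf_eq_aux
    · show X.testBit (2 * m - 1 - d) = true
      have : 2 * m - 1 - d = m + (m - 1 - d) := by omega
      rw [this, ← div_testBit]; exact hdmem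
    · intro k hk hkmem
      simp only [Set.mem_setOf_eq] at hkmem
      have heq : 2 * m - 1 - k = m + (m - 1 - k) := by omega
      rw [heq, ← div_testBit] at hkmem
      have : d ≤ k := by
        have := Nat.sInf_le (show k ∈ {γ : ℕ | (X / 2 ^ m).testBit (m - 1 - γ) = true} from hkmem)
        omega
      omega
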